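/- (Artin–Tate for pairs) Let W be a semiring, W₀ an ideal of W, and define b₁ ⪯ b₂ iff b₂ = b₁ + y for some y ∈ W₀. Let A ⊆ K be sub-semirings of W with K contained in the center of W. Assume: (1) W is affine over A: there exist y₁, …, yₙ ∈ W such that for every w ∈ W there is p in the sub-semiring of W generated by A ∪ {y₁,…,yₙ} with p ⪯ w; (2) W has a finite (⪯)-base b₁, …, b_m over K: for every w ∈ W there exist k₁,…,k_m ∈ K with Σ_i k_i b_i ⪯ w, and whenever Σ_i k_i b_i ⪯ Σ_i k'_i b_i with k_i, k'_i ∈ K, then k_i ⪯ k'_i for each i. Then K is affine over A: there exists a finite subset F ⊆ K such that for every k ∈ K there is h in the sub-semiring of W generated by A ∪ F with h ⪯ k. -/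

import Mathlib

/-- The surpassing relation associated to an ideal `W₀`:
`b₁ ⪯ b₂` iff `b₂ = b₁ + y` for some `y ∈ W₀`. -/
def surp {W : Type*} [Semiring W] (W₀ : AddSubmonoid W) (b₁ b₂ : W) : Prop :=
  ∃ y ∈ W₀, b₂ = b₁ + y


section
variable {W : Type*} [Semiring W] (W₀ : AddSubmonoid W)

theorem surp_refl (x : W) : surp W₀ x x := ⟨0, zero_mem _, (add_zero x).symm⟩

theorem surp_trans {x y z : W} (h1 : surp W₀ x y) (h2 : surp W₀ y z) : surp W₀ x z := by
  obtain ⟨t, ht, rfl⟩ := h1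
  obtain ⟨s, hs, rfl⟩ := h2
  exact ⟨t + s, add_mem ht hs, add_assoc _ _ _⟩

theorem surp_add {x x' p q : W} (h1 : surp W₀ x p) (h2 : surp W₀ x' q) :
    surp W₀ (x + x') (p + q) := by
  obtain ⟨t, ht, rfl⟩ := h1
  obtain ⟨s, hs, rfl⟩ := h2
  exact ⟨t + s, add_mem ht hs, add_add_add_comm _ _ _ _⟩

theorem surp_sum {ι : Type*} (s : Finset ι) (f g : ι → W)
    (hfg : ∀ i ∈ s, surp W₀ (f i) (g i)) :
    surp W₀ (∑ i ∈ s, f i) (∑ i ∈ s, g i) := by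
  classical
  induction s using Finset.cons_induction with
  | empty => simpa using surp_refl W₀ 0
  | cons a s ha ih =>
    simp only [Finset.sum_cons]
    exact surp_add W₀ (hfg a (Finset.mem_cons_self _ _))
      (ih fun i hi => hfg i (Finset.mem_cons_of_mem hi))

theorem surp_mul_left (hW₀l : ∀ w y : W, y ∈ W₀ → w * y ∈ W₀) (c : W) {x p : W}
    (h : surp W₀ x p) : surp W₀ (c * x) (c * p) := by
  obtain ⟨t, ht, rfl⟩ := h
  exact ⟨c * t, hW₀l c t ht, mul_add _ _ _⟩

theorem surp_mul (hW₀l : ∀ w y : W, y ∈ W₀ → w * y ∈ W₀)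
    (hW₀r : ∀ w y : W, y ∈ W₀ → y * w ∈ W₀) {x x' p q : W}
    (h1 : surp W₀ x p) (h2 : surp W₀ x' q) : surp W₀ (x * x') (p * q) := by
  obtain ⟨t, ht, rfl⟩ := h1
  obtain ⟨s, hs, rfl⟩ := h2
  refine ⟨t * x' + (x * s + t * s), ?_, by simp [add_mul, mul_add, add_assoc]⟩
  exact add_mem (hW₀r x' t ht) (add_mem (hW₀l x s hs) (hW₀l t s hs))

end

/-- (Artin–Tate for pairs.) If `W` is affine over `A`, and `W` has a finite
`(⪯)`-base over a central sub-semiring `K ⊇ A`, then `K` is affine over `A`. -/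
theorem artin_tate_for_pairs {W : Type*} [Semiring W]
    (W₀ : AddSubmonoid W)
    (hW₀l : ∀ w y : W, y ∈ W₀ → w * y ∈ W₀)
    (hW₀r : ∀ w y : W, y ∈ W₀ → y * w ∈ W₀)
    (A K : Subsemiring W) (hAK : A ≤ K)
    (hKcentral : ∀ k ∈ K, ∀ w : W, k * w = w * k)
    -- (1) W is affine over A
    (n : ℕ) (y : Fin n → W)
    (haffine : ∀ w : W, ∃ p ∈ Subsemiring.closure ((A : Set W) ∪ Set.range y),
      surp W₀ p w)
    -- (2) W has a finite (⪯)-base b over K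
    (m : ℕ) (b : Fin m → W)
    (hspan : ∀ w : W, ∃ k : Fin m → W, (∀ i, k i ∈ K) ∧
      surp W₀ (∑ i, k i * b i) w)
    (hindep : ∀ k k' : Fin m → W, (∀ i, k i ∈ K) → (∀ i, k' i ∈ K) →
      surp W₀ (∑ i, k i * b i) (∑ i, k' i * b i) → ∀ i, surp W₀ (k i) (k' i)) :
    ∃ F : Finset W, ↑F ⊆ (K : Set W) ∧
      ∀ k ∈ K, ∃ h ∈ Subsemiring.closure ((A : Set W) ∪ ↑F), surp W₀ h k := by
  classical
  obtain ⟨e, heK, he⟩ := hspan 1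
  choose ky hkyK hky using fun j => hspan (y j)
  choose c hcK hc using fun i j => hspan (b i * b j)
  set F : Finset W := (Finset.univ.image e) ∪
      (Finset.univ.image fun p : Fin n × Fin m => ky p.1 p.2) ∪
      (Finset.univ.image fun p : Fin m × Fin m × Fin m => c p.1 p.2.1 p.2.2) with hFdef
  have hFK : (↑F : Set W) ⊆ (K : Set W) := by
    intro x hx
    simp only [hFdef, Finset.coe_union, Set.mem_union, Finset.coe_image,
      Set.mem_image, Finset.mem_coe, Finset.mem_univ, Finset.coe_univ,
      Set.image_univ, Set.mem_range] at hx
    rcases hx with (⟨i, rfl⟩ | ⟨⟨j, i⟩, rfl⟩) | ⟨⟨i, j, l⟩, rfl⟩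
    · exact heK i
    · exact hkyK j i
    · exact hcK i j l
  refine ⟨F, hFK, ?_⟩
  set K' := Subsemiring.closure ((A : Set W) ∪ ↑F) with hK'def
  have hK'K : ∀ x ∈ K', x ∈ K := by
    intro x hx
    refine Subsemiring.closure_le.mpr ?_ hx
    rintro z (hz | hz)
    · exact hAK hz
    · exact hFK hz
  have heF : ∀ i, e i ∈ K' := fun i =>
    Subsemiring.subset_closure (Or.inr (by
      simp [hFdef, Finset.mem_union, Finset.mem_image]))
  have hkyF : ∀ j i, ky j i ∈ K' := fun j i =>
    Subsemiring.subset_closure (Or.inr (by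
      simp only [hFdef, Finset.mem_coe, Finset.mem_union, Finset.mem_image, Finset.mem_univ]
      exact Or.inl (Or.inr ⟨(j, i), by simp⟩)))
  have hcF : ∀ i j l, c i j l ∈ K' := fun i j l =>
    Subsemiring.subset_closure (Or.inr (by
      simp only [hFdef, Finset.mem_coe, Finset.mem_union, Finset.mem_image, Finset.mem_univ]
      exact Or.inr ⟨(i, j, l), by simp⟩))
  -- key lemma: every element of the A∪y-closure is surpassed coefficient-wise by K'
  have key : ∀ p ∈ Subsemiring.closure ((A : Set W) ∪ Set.range y),
      ∃ h : Fin m → W, (∀ i, h i ∈ K') ∧ surp W₀ (∑ i, h i * b i) p := by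
    intro p hp
    induction hp using Subsemiring.closure_induction with
    | mem x hx =>
      rcases hx with hx | ⟨j, rfl⟩
      · refine ⟨fun i => x * e i, fun i =>
          mul_mem (Subsemiring.subset_closure (Or.inl hx)) (heF i), ?_⟩
        have := surp_mul_left W₀ hW₀l x he
        rw [mul_one] at this
        simpa [Finset.mul_sum, mul_assoc] using this
      · exact ⟨ky j, fun i => hkyF j i, hky j⟩
    | zero => exact ⟨0, fun i => zero_mem _, by simpa using surp_refl W₀ 0⟩
    | one => exact ⟨e, heF, he⟩
    | add p q hp hq ihp ihq =>
      obtain ⟨h, hhK, hh⟩ := ihp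
      obtain ⟨h', hh'K, hh'⟩ := ihq
      refine ⟨h + h', fun i => add_mem (hhK i) (hh'K i), ?_⟩
      have := surp_add W₀ hh hh'
      simpa [add_mul, Finset.sum_add_distrib] using this
    | mul p q hp hq ihp ihq =>
      obtain ⟨h, hhK, hh⟩ := ihp
      obtain ⟨h', hh'K, hh'⟩ := ihq
      refine ⟨fun l => ∑ ij : Fin m × Fin m, h ij.1 * h' ij.2 * c ij.1 ij.2 l,
        fun l => sum_mem fun ij _ =>
          mul_mem (mul_mem (hhK ij.1) (hh'K ij.2)) (hcF ij.1 ij.2 l), ?_⟩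
      have step1 : (∑ l, (∑ ij : Fin m × Fin m, h ij.1 * h' ij.2 * c ij.1 ij.2 l) * b l)
          = ∑ ij : Fin m × Fin m, h ij.1 * h' ij.2 * (∑ l, c ij.1 ij.2 l * b l) := by
        calc ∑ l, (∑ ij : Fin m × Fin m, h ij.1 * h' ij.2 * c ij.1 ij.2 l) * b l
            = ∑ l, ∑ ij : Fin m × Fin m, h ij.1 * h' ij.2 * c ij.1 ij.2 l * b l := by
              simp [Finset.sum_mul]
          _ = ∑ ij : Fin m × Fin m, ∑ l, h ij.1 * h' ij.2 * c ij.1 ij.2 l * b l :=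
              Finset.sum_comm
          _ = ∑ ij : Fin m × Fin m, h ij.1 * h' ij.2 * (∑ l, c ij.1 ij.2 l * b l) := by
              simp [Finset.mul_sum, mul_assoc]
      have step2 : surp W₀ (∑ ij : Fin m × Fin m, h ij.1 * h' ij.2 * (∑ l, c ij.1 ij.2 l * b l))
          (∑ ij : Fin m × Fin m, h ij.1 * h' ij.2 * (b ij.1 * b ij.2)) :=
        surp_sum W₀ _ _ _ fun ij _ => surp_mul_left W₀ hW₀l _ (hc ij.1 ij.2)
      have step3 : (∑ ij : Fin m × Fin m, h ij.1 * h' ij.2 * (b ij.1 * b ij.2))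
          = (∑ i, h i * b i) * (∑ j, h' j * b j) := by
        rw [Finset.sum_mul_sum]
        rw [← Finset.sum_product']
        refine Finset.sum_congr rfl fun ij _ => ?_
        have hcomm : h' ij.2 * b ij.1 = b ij.1 * h' ij.2 :=
          hKcentral (h' ij.2) (hK'K _ (hh'K ij.2)) (b ij.1)
        rw [mul_assoc, ← mul_assoc (h' ij.2), hcomm, mul_assoc (b ij.1), ← mul_assoc]
      rw [step1]
      refine surp_trans W₀ step2 ?_
      rw [step3]
      exact surp_mul W₀ hW₀l hW₀r hh hh'
  intro k hk
  rcases Nat.eq_zero_or_pos m with hm | hm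
  · subst hm
    obtain ⟨k0, _, hk0⟩ := hspan k
    refine ⟨0, zero_mem _, ?_⟩
    simpa using hk0
  · set j0 : Fin m := ⟨0, hm⟩ with hj0
    obtain ⟨p, hp, hpk⟩ := haffine (k * b j0)
    obtain ⟨h, hhK', hh⟩ := key p hp
    have h2 : surp W₀ (∑ i, h i * b i) (∑ i, (if i = j0 then k else 0) * b i) := by
      have : (∑ i, (if i = j0 then k else 0) * b i) = k * b j0 := by
        simp [Finset.sum_ite_eq', ite_mul]
      rw [this]
      exact surp_trans W₀ hh hpk
    have h3 := hindep h (fun i => if i = j0 then k else 0)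
      (fun i => hK'K _ (hhK' i))
      (fun i => by
        by_cases hij : i = j0
        · rw [if_pos hij]; exact hk
        · rw [if_neg hij]; exact zero_mem K) h2 j0
    simp only [if_pos rfl] at h3
    exact ⟨h j0, hhK' j0, h3⟩
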